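/- Fix p_0 with 0 < p_0 < 1/2. There exists ϖ_0 > 0 such that for every ϖ ≥ ϖ_0, the binary message importance measure L((p, 1 − p), ϖ) = log( p · exp(ϖ(1 − p)) + (1 − p) · exp(ϖ p) ) is strictly decreasing as a function of p on the interval (p_0, 1/2]; in particular, for every p with p_0 < p < 1/2 and every ϖ ≥ ϖ_0, L((p, 1 − p), ϖ) > L((1/2, 1/2), ϖ) = ϖ/2. -/

import Mathlib

open Real Set

private lemma mim_key (a b : ℝ) (ha : 2 ≤ a) (hab : a < b) :
    (b - 1) * Real.exp a < (a - 1) * Real.exp b := by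
  have h0 : b - a ≠ 0 := by linarith
  have h := Real.add_one_lt_exp h0
  have he : Real.exp b = Real.exp a * Real.exp (b - a) := by
    rw [← Real.exp_add]; ring_nf
  rw [he]
  nlinarith [Real.exp_pos a,
    mul_pos (Real.exp_pos a) (mul_pos (show (0:ℝ) < a - 1 by linarith) (sub_pos.2 h)),
    mul_nonneg (mul_nonneg (le_of_lt (Real.exp_pos a)) (show (0:ℝ) ≤ a - 2 by linarith)) (show (0:ℝ) ≤ b - a by linarith)]

private lemma mim_gderiv (ϖ p : ℝ) :
    HasDerivAt (fun p : ℝ => p * Real.exp (ϖ * (1 - p)) + (1 - p) * Real.exp (ϖ * p))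
      (Real.exp (ϖ * (1 - p)) * (1 - ϖ * p) + Real.exp (ϖ * p) * (ϖ * (1 - p) - 1)) p := by
  have h1 : HasDerivAt (fun p : ℝ => ϖ * (1 - p)) (ϖ * (0 - 1)) p :=
    ((hasDerivAt_const p (1:ℝ)).sub (hasDerivAt_id p)).const_mul ϖ
  have h2 : HasDerivAt (fun p : ℝ => ϖ * p) (ϖ * 1) p :=
    (hasDerivAt_id p).const_mul ϖ
  have e1 := ((hasDerivAt_id p).mul h1.exp)
  have e2 := (((hasDerivAt_const p (1:ℝ)).sub (hasDerivAt_id p)).mul h2.exp)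
  have := e1.add e2
  refine this.congr_deriv ?_
  simp only [id, Pi.sub_apply]
  ring

theorem mim_bernoulli_decreasing (p₀ : ℝ) (hp₀ : 0 < p₀) (hp₀' : p₀ < 1 / 2) :
    ∃ ϖ₀ : ℝ, 0 < ϖ₀ ∧ ∀ ϖ : ℝ, ϖ₀ ≤ ϖ →
      StrictAntiOn
        (fun p : ℝ => Real.log
          (p * Real.exp (ϖ * (1 - p)) + (1 - p) * Real.exp (ϖ * p)))
        (Set.Ioc p₀ (1 / 2)) ∧
      ∀ p : ℝ, p₀ < p → p < 1 / 2 →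
        ϖ / 2 < Real.log
          (p * Real.exp (ϖ * (1 - p)) + (1 - p) * Real.exp (ϖ * p)) := by
  refine ⟨2 / p₀, by positivity, fun ϖ hϖ => ?_⟩
  have hϖ2 : 2 ≤ ϖ * p₀ := by
    rw [div_le_iff₀ hp₀] at hϖ
    linarith
  have hϖpos : 0 < ϖ := by nlinarith
  set g : ℝ → ℝ := fun p => p * Real.exp (ϖ * (1 - p)) + (1 - p) * Real.exp (ϖ * p) with hg
  have hgpos : ∀ p ∈ Set.Ioc p₀ (1/2), 0 < g p := by
    intro p hp
    have h1 : 0 < p := lt_trans hp₀ hp.1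
    have h2 : 0 < 1 - p := by have := hp.2; linarith
    have := Real.exp_pos (ϖ * (1 - p))
    have := Real.exp_pos (ϖ * p)
    positivity
  have hanti : StrictAntiOn (fun p => Real.log (g p)) (Set.Ioc p₀ (1/2)) := by
    apply strictAntiOn_of_deriv_neg (convex_Ioc _ _)
    · apply ContinuousOn.log
      · apply Continuous.continuousOn
        continuity
      · intro x hx; exact ne_of_gt (hgpos x hx)
    · intro x hx
      rw [interior_Ioc] at hx
      have hgp : 0 < g x := hgpos x ⟨hx.1, le_of_lt hx.2⟩
      have hd := (mim_gderiv ϖ x).log (ne_of_gt hgp)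
      rw [hd.deriv]
      apply div_neg_of_neg_of_pos _ hgp
      -- key inequality
      have ha : 2 ≤ ϖ * x := le_trans hϖ2 (by nlinarith [hx.1])
      have hab : ϖ * x < ϖ * (1 - x) := by nlinarith [hx.2]
      have := mim_key (ϖ * x) (ϖ * (1 - x)) ha hab
      nlinarith [this]
  refine ⟨hanti, fun p hp1 hp2 => ?_⟩
  have hmem : p ∈ Set.Ioc p₀ (1/2) := ⟨hp1, le_of_lt hp2⟩
  have hmem2 : (1/2 : ℝ) ∈ Set.Ioc p₀ (1/2) := ⟨hp₀', le_refl _⟩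
  have := hanti hmem hmem2 hp2
  simp only at this
  have hval : Real.log (g (1/2)) = ϖ / 2 := by
    have : g (1/2) = Real.exp (ϖ / 2) := by
      simp only [hg]
      ring_nf
    rw [this, Real.log_exp]
  rw [hval] at this
  exact this
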